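/- Fix real numbers γ_E > 0, α > 0, and R > 0. Then lim_{γ_D → ∞} γ_D · 𝒫₂(α·γ_D, γ_D, γ_E, R) = (2^R − 1)·(1 + 1/α) + 2^R·γ_E/α. In particular, with γ_R = α·γ_D and γ_E fixed, the Case II secrecy outage probability satisfies 𝒫₂ ≈ 𝓜₂·γ_D^{−1} with 𝓜₂ = (2^R − 1)(1 + 1/α) + 2^R·γ_E/α > 0 as γ_D → ∞, so the secrecy diversity order is 1. -/

import Mathlib

open Filter Real

/-- Case II closed-form secrecy outage probability. -/
noncomputable def P2 (γR γD γE R : ℝ) : ℝ :=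
  1 - Real.exp (-((2 : ℝ) ^ R - 1) / γD - ((2 : ℝ) ^ R - 1) / γR) *
    (1 + ((2 : ℝ) ^ R / γR) * γE)⁻¹

/-- Theorem 5 (Case II, first high-SNR scenario): with `γ_E` fixed and `γ_R = α·γ_D → ∞`,
`γ_D · 𝒫₂ → 𝓜₂ = (2^R − 1)(1 + 1/α) + 2^R·γ_E/α`, and `𝓜₂ > 0`
(so the secrecy diversity order is 1). -/
theorem case2_asymptotic_fixed_eve (γE α R : ℝ) (hγE : 0 < γE) (hα : 0 < α) (hR : 0 < R) :
    Tendsto (fun γD : ℝ => γD * P2 (α * γD) γD γE R) atTop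
      (nhds (((2 : ℝ) ^ R - 1) * (1 + 1 / α) + (2 : ℝ) ^ R * γE / α)) ∧
    0 < ((2 : ℝ) ^ R - 1) * (1 + 1 / α) + (2 : ℝ) ^ R * γE / α := by
  have h2 : (1 : ℝ) < (2 : ℝ) ^ R :=
    (Real.one_lt_rpow_iff_of_pos (by norm_num : (0:ℝ) < 2)).2 (Or.inl ⟨one_lt_two, hR⟩)
  set a : ℝ := ((2 : ℝ) ^ R - 1) * (1 + 1 / α) with ha
  set b : ℝ := (2 : ℝ) ^ R * γE / α with hb
  set g : ℝ → ℝ := fun x => 1 - Real.exp (-(a * x)) * (1 + b * x)⁻¹ with hg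
  have hpos : 0 < a + b := by
    have h1 : 0 < a := by
      apply mul_pos (by linarith)
      have := one_div_pos.2 hα
      linarith
    have h2 : 0 < b := by
      apply div_pos (mul_pos (by linarith) hγE) hα
    linarith
  have hderiv : HasDerivAt g (a + b) 0 := by
    have h1 : HasDerivAt (fun x : ℝ => -(a * x)) (-a) 0 := by
      have := ((hasDerivAt_id (0 : ℝ)).const_mul a).neg
      simp only [mul_one] at this
      exact this
    have hexp : HasDerivAt (fun x : ℝ => Real.exp (-(a * x)))
        (Real.exp (-(a * 0)) * (-a)) 0 := h1.exp
    have hlin : HasDerivAt (fun x : ℝ => 1 + b * x) b 0 := by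
      simpa using ((hasDerivAt_id (0 : ℝ)).const_mul b).const_add 1
    have hinv : HasDerivAt (fun x : ℝ => (1 + b * x)⁻¹)
        (-b / (1 + b * 0) ^ 2) 0 := hlin.inv (by norm_num)
    have := (hexp.mul hinv).const_sub 1
    refine this.congr_deriv ?_
    simp [Real.exp_zero]
    ring
  have hslope := hasDerivAt_iff_tendsto_slope.1 hderiv
  have hinvT : Tendsto (fun γD : ℝ => γD⁻¹) atTop (nhdsWithin (0 : ℝ) {(0:ℝ)}ᶜ) := by
    apply tendsto_nhdsWithin_of_tendsto_nhds_of_eventually_within _ tendsto_inv_atTop_zero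
    filter_upwards [eventually_gt_atTop (0 : ℝ)] with x hx
    simpa using (inv_pos.2 hx).ne'
  have hcomp : Tendsto (fun γD : ℝ => slope g 0 γD⁻¹) atTop (nhds (a + b)) :=
    hslope.comp hinvT
  constructor
  · have heq : (fun γD : ℝ => γD * P2 (α * γD) γD γE R) =ᶠ[atTop]
        (fun γD : ℝ => slope g 0 γD⁻¹) := by
      filter_upwards [eventually_gt_atTop (0 : ℝ)] with x hx
      have hx0 : x ≠ 0 := hx.ne'
      have hg0 : g 0 = 0 := by simp [hg]
      rw [slope_def_field, hg0, sub_zero, sub_zero, div_eq_mul_inv, inv_inv, mul_comm]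
      congr 1
      simp only [hg, P2, ha, hb]
      congr 2
      · field_simp
        ring
      · field_simp
    exact Tendsto.congr' heq.symm hcomp
  · simpa [ha, hb] using hpos
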